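/- A collection C of nonempty subsets of N is balanced if and only if for every side payment σ (σ ∈ ℝ^N with σ(N)=0), either σ(S) = 0 for all S ∈ C, or there exist S, T ∈ C with σ(S) > 0 and σ(T) < 0. -/

import Mathlib

open Finset

variable {α : Type*} [Fintype α] [DecidableEq α]

/-- Sum of the payments of the players in coalition `S`. -/
def coalSum (x : α → ℝ) (S : Finset α) : ℝ := ∑ i ∈ S, x i

/-- `B` is a balanced collection on `M` with weights `w`. -/
def IsBalancedOn (M : Finset α) (B : Finset (Finset α)) (w : Finset α → ℝ) : Prop :=
  (∀ S ∈ B, S.Nonempty ∧ S ⊆ M ∧ 0 < w S) ∧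
  (∀ i ∈ M, ∑ S ∈ B.filter (fun S => i ∈ S), w S = 1)

/-- The game `v` is balanced. -/
def BalancedGame (v : Finset α → ℝ) : Prop :=
  ∀ B w, IsBalancedOn (univ : Finset α) B w → ∑ S ∈ B, w S * v S ≤ v univ

/-- `x` is a preimputation of the game `v`. -/
def Preimp (v : Finset α → ℝ) (x : α → ℝ) : Prop := coalSum x univ = v univ

/-- `y` dominates `x` via the coalition `S`. -/
def Dominates (v : Finset α → ℝ) (y x : α → ℝ) (S : Finset α) : Prop :=
  coalSum y S ≤ v S ∧ ∀ i ∈ S, x i < y i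

/-- `x` belongs to the core of the game `v`. -/
def InCore (v : Finset α → ℝ) (x : α → ℝ) : Prop :=
  Preimp v x ∧ ∀ S : Finset α, S.Nonempty → v S ≤ coalSum x S

set_option linter.unusedSectionVars false

section Aux
variable {ι : Type*} [DecidableEq ι]

def dotp [Fintype α] (x y : α → ℝ) : ℝ := ∑ j, x j * y j

lemma dotp_comm (x y : α → ℝ) : dotp x y = dotp y x := by
  simp [dotp, mul_comm]

lemma dotp_sub_smul_left (x z y : α → ℝ) (c : ℝ) :
    dotp (x - c • z) y = dotp x y - c * dotp z y := by
  simp [dotp, sub_mul, Finset.sum_sub_distrib, Finset.mul_sum, mul_assoc]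

lemma dotp_sub_smul_right (x z y : α → ℝ) (c : ℝ) :
    dotp y (x - c • z) = dotp y x - c * dotp y z := by
  rw [dotp_comm, dotp_sub_smul_left, dotp_comm x y, dotp_comm z y]

lemma farkas (t : Finset ι) (v : ι → α → ℝ) (b : α → ℝ) :
    (∃ c : ι → ℝ, (∀ i ∈ t, 0 ≤ c i) ∧ b = ∑ i ∈ t, c i • v i) ∨
    (∃ y : α → ℝ, (∀ i ∈ t, 0 ≤ dotp (v i) y) ∧ dotp b y < 0) := by
  induction t using Finset.induction_on generalizing v b with
  | empty =>
    by_cases hb : b = 0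
    · exact Or.inl ⟨0, by simp, by simp [hb]⟩
    · refine Or.inr ⟨-b, by simp, ?_⟩
      have h1 : dotp b (-b) = -dotp b b := by
        simp [dotp, mul_neg, Finset.sum_neg_distrib]
      have h2 : 0 < dotp b b := by
        obtain ⟨j, hj⟩ : ∃ j, b j ≠ 0 := by
          by_contra h; push_neg at h; exact hb (funext h)
        exact Finset.sum_pos' (fun j _ => mul_self_nonneg _)
          ⟨j, Finset.mem_univ j, mul_self_pos.mpr hj⟩
      rw [h1]; linarith
  | @insert a t ha ih =>
    rcases ih v b with ⟨c, hc, hbc⟩ | ⟨y, hy, hby⟩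
    · refine Or.inl ⟨fun i => if i = a then 0 else c i, ?_, ?_⟩
      · intro i hi
        by_cases h : i = a
        · simp [h]
        · simpa [h] using hc i ((Finset.mem_insert.mp hi).resolve_left h)
      · rw [Finset.sum_insert ha]; beta_reduce; rw [if_pos rfl, zero_smul, zero_add, hbc]
        exact Finset.sum_congr rfl fun i hi => by
          rw [if_neg (by rintro rfl; exact ha hi)]
    · by_cases hay : 0 ≤ dotp (v a) y
      · refine Or.inr ⟨y, ?_, hby⟩
        intro i hi
        rcases Finset.mem_insert.mp hi with rfl | h
        · exact hay
        · exact hy i h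
      · push_neg at hay
        have hq0 : dotp (v a) y ≠ 0 := ne_of_lt hay
        rcases ih (fun i => v i - (dotp (v i) y / dotp (v a) y) • v a)
            (b - (dotp b y / dotp (v a) y) • v a) with ⟨c, hc, hbc⟩ | ⟨z, hz, hbz⟩
        · have hsum0 : 0 ≤ ∑ i ∈ t, c i * dotp (v i) y :=
            Finset.sum_nonneg fun i hi => mul_nonneg (hc i hi) (hy i hi)
          have hca0 : 0 ≤ (dotp b y - ∑ i ∈ t, c i * dotp (v i) y) / dotp (v a) y :=
            le_of_lt (div_pos_of_neg_of_neg (by linarith) hay)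
          refine Or.inl ⟨fun i => if i = a
              then (dotp b y - ∑ i ∈ t, c i * dotp (v i) y) / dotp (v a) y
              else c i, ?_, ?_⟩
          · intro i hi
            by_cases h : i = a
            · simpa [h] using hca0
            · simp only [if_neg h]
              exact hc i ((Finset.mem_insert.mp hi).resolve_left h)
          · rw [Finset.sum_insert ha]; beta_reduce; rw [if_pos rfl]
            have hsum : ∑ i ∈ t, (if i = a
                then (dotp b y - ∑ i ∈ t, c i * dotp (v i) y) / dotp (v a) y
                else c i) • v i = ∑ i ∈ t, c i • v i :=
              Finset.sum_congr rfl fun i hi => by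
                rw [if_neg (by rintro rfl; exact ha hi)]
            rw [hsum]
            have expand : ∑ i ∈ t, c i • (v i - (dotp (v i) y / dotp (v a) y) • v a)
                = ∑ i ∈ t, c i • v i
                  - ((∑ i ∈ t, c i * dotp (v i) y) / dotp (v a) y) • v a := by
              have hterm : ∀ i ∈ t, c i • (v i - (dotp (v i) y / dotp (v a) y) • v a)
                  = c i • v i - (c i * dotp (v i) y / dotp (v a) y) • v a := fun i _ => by
                rw [smul_sub, smul_smul, mul_div_assoc]
              rw [Finset.sum_congr rfl hterm, Finset.sum_sub_distrib, ← Finset.sum_smul,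
                Finset.sum_div]
            rw [expand, sub_eq_iff_eq_add] at hbc
            conv_lhs => rw [hbc]
            rw [sub_div, sub_smul]
            abel
        · refine Or.inr ⟨z - (dotp (v a) z / dotp (v a) y) • y, ?_, ?_⟩
          · intro i hi
            rcases Finset.mem_insert.mp hi with rfl | h
            · rw [dotp_sub_smul_right, div_mul_cancel₀ _ hq0, sub_self]
            · have h1 := hz i h
              rw [dotp_sub_smul_left] at h1
              rw [dotp_sub_smul_right]
              have he : dotp (v a) z / dotp (v a) y * dotp (v i) y
                  = dotp (v i) y / dotp (v a) y * dotp (v a) z := by ring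
              linarith
          · have h1 := hbz
            rw [dotp_sub_smul_left] at h1
            rw [dotp_sub_smul_right]
            have he : dotp (v a) z / dotp (v a) y * dotp b y
                = dotp b y / dotp (v a) y * dotp (v a) z := by ring
            linarith



def chi (S : Finset α) : α → ℝ := fun i => if i ∈ S then (1 : ℝ) else 0

lemma dotp_chi (S : Finset α) (σ : α → ℝ) : dotp (chi S) σ = coalSum σ S := by
  simp [dotp, chi, coalSum, ite_mul, Finset.sum_ite_mem, Finset.univ_inter]

lemma dotp_neg_left (x y : α → ℝ) : dotp (-x) y = -dotp x y := by
  simp [dotp, neg_mul, Finset.sum_neg_distrib]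

lemma sum_w_coal (C : Finset (Finset α)) (w : Finset α → ℝ) (σ : α → ℝ)
    (hw : ∀ i : α, ∑ S ∈ C.filter (fun S => i ∈ S), w S = 1) :
    ∑ S ∈ C, w S * coalSum σ S = coalSum σ univ := by
  calc ∑ S ∈ C, w S * coalSum σ S
      = ∑ S ∈ C, ∑ i : α, (if i ∈ S then w S * σ i else 0) := by
        refine Finset.sum_congr rfl fun S _ => ?_
        rw [coalSum, Finset.mul_sum, ← Finset.sum_filter]
        congr 1
        simp
    _ = ∑ i : α, ∑ S ∈ C, (if i ∈ S then w S * σ i else 0) := Finset.sum_comm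
    _ = ∑ i : α, (∑ S ∈ C.filter (fun S => i ∈ S), w S) * σ i := by
        refine Finset.sum_congr rfl fun i _ => ?_
        rw [Finset.sum_mul, Finset.sum_filter]
    _ = ∑ i : α, σ i := by
        refine Finset.sum_congr rfl fun i _ => ?_
        rw [hw i, one_mul]
    _ = coalSum σ univ := rfl

lemma key_lemma (C : Finset (Finset α)) (hC : ∀ S ∈ C, S.Nonempty)
    (h : ∀ σ : α → ℝ, coalSum σ univ = 0 →
      (∀ S ∈ C, coalSum σ S = 0) ∨
      (∃ S ∈ C, ∃ T ∈ C, 0 < coalSum σ S ∧ coalSum σ T < 0))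
    (S₀ : Finset α) (hS₀ : S₀ ∈ C) :
    ∃ lam : Finset α → ℝ, (∀ S ∈ C, 0 ≤ lam S) ∧ 0 < lam S₀ ∧
      ∀ i : α, ∑ S ∈ C.filter (fun S => i ∈ S), lam S = 1 := by
  obtain ⟨i₀, hi₀⟩ := hC S₀ hS₀
  have hnone : (none : Option (Finset α)) ∉ C.image some := by simp
  rcases farkas (insert none (C.image some))
      (fun o => Option.elim o (chi (univ : Finset α)) (fun S => -chi S)) (chi S₀) with
      ⟨c, hc, hbc⟩ | ⟨y, hy, hby⟩
  · -- combination exists: extract weights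
    rw [Finset.sum_insert hnone,
      Finset.sum_image (fun _ _ _ _ hh => Option.some_injective _ hh)] at hbc
    simp only [Option.elim] at hbc
    -- hbc : chi S₀ = c none • chi univ + ∑ S ∈ C, c (some S) • (-chi S)
    have hcS : ∀ S ∈ C, 0 ≤ c (some S) := fun S hS =>
      hc (some S) (Finset.mem_insert_of_mem (Finset.mem_image_of_mem some hS))
    have hpt : ∀ i : α, chi S₀ i + ∑ S ∈ C, c (some S) * chi S i = c none := by
      intro i
      have h1 := congrFun hbc i
      simp only [Pi.add_apply, Pi.smul_apply, Finset.sum_apply, Pi.neg_apply, smul_eq_mul,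
        mul_neg] at h1
      have huniv : chi (univ : Finset α) i = 1 := if_pos (Finset.mem_univ i)
      rw [huniv, mul_one, Finset.sum_neg_distrib] at h1
      linarith
    have hchinn : ∀ (S : Finset α) (i : α), 0 ≤ chi S i := fun S i => by
      unfold chi; split <;> norm_num
    have ha1 : 1 ≤ c none := by
      have h1 := hpt i₀
      have h2 : chi S₀ i₀ = 1 := if_pos hi₀
      have h3 : 0 ≤ ∑ S ∈ C, c (some S) * chi S i₀ :=
        Finset.sum_nonneg fun S hS => mul_nonneg (hcS S hS) (hchinn S i₀)
      linarith
    have ha0 : (0:ℝ) < c none := by linarith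
    refine ⟨fun S => (c (some S) + if S = S₀ then 1 else 0) / c none, ?_, ?_, ?_⟩
    · intro S hS
      beta_reduce
      apply div_nonneg _ (le_of_lt ha0)
      have := hcS S hS
      split <;> linarith
    · beta_reduce
      rw [if_pos rfl]
      exact div_pos (by linarith [hcS S₀ hS₀]) ha0
    · intro i
      beta_reduce
      rw [← Finset.sum_div]
      rw [div_eq_one_iff_eq (ne_of_gt ha0)]
      rw [Finset.sum_add_distrib]
      have e1 : ∑ S ∈ C.filter (fun S => i ∈ S), c (some S)
          = ∑ S ∈ C, c (some S) * chi S i := by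
        rw [Finset.sum_filter]
        refine Finset.sum_congr rfl fun S _ => ?_
        unfold chi; split <;> simp
      have e2 : (∑ S ∈ C.filter (fun S => i ∈ S), if S = S₀ then (1:ℝ) else 0)
          = chi S₀ i := by
        rw [Finset.sum_ite_eq' (C.filter (fun S => i ∈ S)) S₀ (fun _ => (1:ℝ))]
        unfold chi
        by_cases hi : i ∈ S₀
        · simp [Finset.mem_filter, hS₀, hi]
        · simp [Finset.mem_filter, hi]
      rw [e1, e2]
      linarith [hpt i]
  · -- separation: contradiction
    exfalso
    have hyuniv : 0 ≤ coalSum y univ := by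
      have := hy none (Finset.mem_insert_self _ _)
      simpa [Option.elim, dotp_chi] using this
    have hyS : ∀ S ∈ C, coalSum y S ≤ 0 := by
      intro S hS
      have := hy (some S) (Finset.mem_insert_of_mem (Finset.mem_image_of_mem some hS))
      simp only [Option.elim, dotp_neg_left, dotp_chi] at this
      linarith
    have hyS₀ : coalSum y S₀ < 0 := by rwa [dotp_chi] at hby
    have hα : Nonempty α := ⟨i₀⟩
    set n : ℝ := (Fintype.card α : ℝ) with hn
    have hn0 : 0 < n := by
      rw [hn]; exact_mod_cast Fintype.card_pos
    set σ : α → ℝ := fun i => y i - coalSum y univ / n with hσ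
    have hcoal : ∀ T : Finset α, coalSum σ T
        = coalSum y T - (T.card : ℝ) * (coalSum y univ / n) := by
      intro T
      rw [coalSum, hσ]
      rw [Finset.sum_sub_distrib, Finset.sum_const, nsmul_eq_mul]
      rfl
    have hσuniv : coalSum σ univ = 0 := by
      rw [hcoal, Finset.card_univ]
      field_simp
      rw [hn]; ring
    have hσle : ∀ S ∈ C, coalSum σ S ≤ 0 := by
      intro S hS
      rw [hcoal]
      have : 0 ≤ (S.card : ℝ) * (coalSum y univ / n) :=
        mul_nonneg (Nat.cast_nonneg _) (div_nonneg hyuniv (le_of_lt hn0))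
      linarith [hyS S hS]
    have hσS₀ : coalSum σ S₀ < 0 := by
      rw [hcoal]
      have : 0 ≤ (S₀.card : ℝ) * (coalSum y univ / n) :=
        mul_nonneg (Nat.cast_nonneg _) (div_nonneg hyuniv (le_of_lt hn0))
      linarith
    rcases h σ hσuniv with hall | ⟨S, hS, T, hT, hpos, _⟩
    · exact absurd (hall S₀ hS₀) (ne_of_lt hσS₀)
    · linarith [hσle S hS]

end Aux

theorem stmt_7 (C : Finset (Finset α)) (hCne : C.Nonempty) (hC : ∀ S ∈ C, S.Nonempty) :
    (∃ w : Finset α → ℝ, IsBalancedOn (univ : Finset α) C w) ↔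
    ∀ σ : α → ℝ, coalSum σ univ = 0 →
      (∀ S ∈ C, coalSum σ S = 0) ∨
      (∃ S ∈ C, ∃ T ∈ C, 0 < coalSum σ S ∧ coalSum σ T < 0) := by
  constructor
  · rintro ⟨w, hw1, hw2⟩ σ hσ
    by_contra hcon
    push_neg at hcon
    obtain ⟨⟨S₁, hS₁, hS₁ne⟩, hnr⟩ := hcon
    have hkey : ∑ S ∈ C, w S * coalSum σ S = 0 := by
      rw [sum_w_coal C w σ (fun i => hw2 i (Finset.mem_univ i)), hσ]
    rcases lt_or_gt_of_ne hS₁ne with hneg | hpos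
    · -- coalSum σ S₁ < 0 : all values must be ≤ 0
      have hall : ∀ T ∈ C, coalSum σ T ≤ 0 := by
        intro T hT
        by_contra hT0
        push_neg at hT0
        linarith [hnr T hT S₁ hS₁ hT0]
      have : (0:ℝ) < ∑ S ∈ C, -(w S * coalSum σ S) := by
        refine Finset.sum_pos' (fun S hS => ?_) ⟨S₁, hS₁, ?_⟩
        · have := mul_nonpos_of_nonneg_of_nonpos (le_of_lt (hw1 S hS).2.2) (hall S hS)
          linarith
        · have := mul_pos (hw1 S₁ hS₁).2.2 (neg_pos.mpr hneg)
          nlinarith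
      rw [Finset.sum_neg_distrib, hkey] at this
      linarith
    · have hall : ∀ T ∈ C, 0 ≤ coalSum σ T := fun T hT => hnr S₁ hS₁ T hT hpos
      have : (0:ℝ) < ∑ S ∈ C, w S * coalSum σ S :=
        Finset.sum_pos' (fun S hS => mul_nonneg (le_of_lt (hw1 S hS).2.2) (hall S hS))
          ⟨S₁, hS₁, mul_pos (hw1 S₁ hS₁).2.2 hpos⟩
      linarith
  · intro h
    have key : ∀ S₀, S₀ ∈ C → ∃ lam : Finset α → ℝ, (∀ S ∈ C, 0 ≤ lam S) ∧ 0 < lam S₀ ∧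
        ∀ i : α, ∑ S ∈ C.filter (fun S => i ∈ S), lam S = 1 :=
      fun S₀ hS₀ => key_lemma C hC h S₀ hS₀
    choose lam hlam0 hlam1 hlam2 using key
    refine ⟨fun S => (∑ T ∈ C.attach, lam T.1 T.2 S) / C.card, ?_, ?_⟩
    · intro S hS
      refine ⟨hC S hS, Finset.subset_univ S, ?_⟩
      apply div_pos
      · exact Finset.sum_pos' (fun T _ => hlam0 T.1 T.2 S hS)
          ⟨⟨S, hS⟩, Finset.mem_attach _ _, hlam1 S hS⟩
      · exact_mod_cast Finset.card_pos.mpr hCne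
    · intro i _
      have hcard : (C.card : ℝ) ≠ 0 := by
        have := Finset.card_pos.mpr hCne
        positivity
      rw [← Finset.sum_div, div_eq_one_iff_eq hcard, Finset.sum_comm]
      calc ∑ T ∈ C.attach, ∑ S ∈ C.filter (fun S => i ∈ S), lam T.1 T.2 S
          = ∑ T ∈ C.attach, 1 := Finset.sum_congr rfl fun T _ => hlam2 T.1 T.2 i
        _ = (C.card : ℝ) := by rw [Finset.sum_const, Finset.card_attach, nsmul_eq_mul, mul_one]
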